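/- arXiv:2012.11718 — 3 statements merged into one kernel-verified Lean document; each statement's English description precedes it below -/
import Mathlib

section
/- Let S be a finitely generated commutative domain containing ℤ (equivalently, a finitely generated ℤ-algebra that is an integral domain of characteristic zero). Then there are infinitely many primes p for which there exists a ring homomorphism φₚ : S → 𝔽ₚ to the prime field with p elements; that is, for every natural number N there exist a prime p > N and a ring homomorphism S → ℤ/pℤ. -/
set_option maxHeartbeats 1000000
set_option synthInstance.maxHeartbeats 400000

open Polynomial


lemma exists_prime_root (f : ℤ[X]) (hdeg : 1 ≤ f.natDegree)
    (M : ℤ) (hM : M ≠ 0) (N : ℕ) :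
    ∃ p : ℕ, N < p ∧ p.Prime ∧ ∃ x : ZMod p,
      (f.map (Int.castRingHom (ZMod p))).eval x = 0 ∧ (M : ZMod p) ≠ 0 := by
  have hMabs : 1 ≤ M.natAbs := Int.natAbs_pos.mpr hM
  by_cases hc0 : f.coeff 0 = 0
  · obtain ⟨p, hp, hpp⟩ := Nat.exists_infinite_primes (max N M.natAbs + 1)
    refine ⟨p, by omega, hpp, 0, ?_, ?_⟩
    · rw [← coeff_zero_eq_eval_zero, coeff_map, hc0]; simp
    · intro h
      rw [ZMod.intCast_zmod_eq_zero_iff_dvd] at h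
      have h6 : p ∣ M.natAbs := by simpa using Int.natAbs_dvd_natAbs.mpr h
      have : p ≤ M.natAbs := Nat.le_of_dvd (by omega) h6
      omega
  · have hfacne : (N.factorial : ℤ) ≠ 0 := Int.natCast_ne_zero.mpr N.factorial_ne_zero
    have ha0 : f.coeff 0 * (M * N.factorial) ≠ 0 := mul_ne_zero hc0 (mul_ne_zero hM hfacne)
    have hfin : ∀ v : ℤ, {m : ℤ | f.eval m = v}.Finite := by
      intro v
      have hne : f - C v ≠ 0 := by
        intro h
        have hfv : f = C v := by rwa [sub_eq_zero] at h
        rw [hfv, natDegree_C] at hdeg; omega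
      have h2 := Polynomial.finite_setOf_isRoot hne
      convert h2 using 1
      ext m; simp [IsRoot, sub_eq_zero]
    have hinf : (Set.range fun j : ℕ =>
        f.coeff 0 * (M * N.factorial) * (j + 1)).Infinite := by
      apply Set.infinite_range_of_injective
      intro i j hij
      simp only at hij
      have := mul_left_cancel₀ ha0 hij
      omega
    obtain ⟨m, hmem, hbad⟩ := (hinf.diff
      (((hfin (-(f.coeff 0))).union (hfin 0)).union (hfin (f.coeff 0)))).nonempty
    obtain ⟨j, rfl⟩ := hmem
    simp only [Set.mem_union, Set.mem_setOf_eq, not_or] at hbad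
    obtain ⟨⟨hb1, hb2⟩, hb3⟩ := hbad
    have hdvd : f.coeff 0 * (M * N.factorial) * (j + 1) ∣
        f.eval (f.coeff 0 * (M * N.factorial) * (j + 1)) - f.coeff 0 := by
      have h3 := Polynomial.sub_dvd_eval_sub (f.coeff 0 * (M * N.factorial) * (j + 1)) 0 f
      simpa [coeff_zero_eq_eval_zero] using h3
    obtain ⟨h, hh⟩ := hdvd
    have hfw : f.eval (f.coeff 0 * (M * N.factorial) * (j + 1)) =
        f.coeff 0 * (1 + (M * N.factorial) * ((j + 1) * h)) := by
      linear_combination hh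
    have hw2 : 2 ≤ (1 + (M * N.factorial) * ((j + 1) * h)).natAbs := by
      rw [hfw] at hb1 hb2 hb3
      have e1 : (1 + (M * N.factorial) * ((j + 1) * h)) ≠ -1 := by
        intro h4; apply hb1; rw [h4]; ring
      have e2 : (1 + (M * N.factorial) * ((j + 1) * h)) ≠ 0 := by
        intro h4; apply hb2; rw [h4]; ring
      have e3 : (1 + (M * N.factorial) * ((j + 1) * h)) ≠ 1 := by
        intro h4; apply hb3; rw [h4]; ring
      omega
    set w : ℤ := 1 + (M * N.factorial) * ((j + 1) * h) with hwdef
    have hpw : (w.natAbs.minFac : ℤ) ∣ w :=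
      (Int.ofNat_dvd.mpr (Nat.minFac_dvd _)).trans (Int.natAbs_dvd.mpr dvd_rfl)
    have hpM : ¬ ((w.natAbs.minFac : ℤ) ∣ M) := by
      intro h4
      have h5 : (w.natAbs.minFac : ℤ) ∣ w - 1 := by
        have h7 : w - 1 = M * ((N.factorial : ℤ) * ((j + 1) * h)) := by rw [hwdef]; ring
        rw [h7]; exact h4.mul_right _
      have : (w.natAbs.minFac : ℤ) ∣ 1 := (dvd_sub hpw h5).trans (dvd_of_eq (by ring))
      have := Int.le_of_dvd one_pos this
      have := (Nat.minFac_prime (show w.natAbs ≠ 1 by omega)).two_le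
      omega
    refine ⟨w.natAbs.minFac, ?_, Nat.minFac_prime (by omega), ?_⟩
    · by_contra hle
      push_neg at hle
      have hpfac : (w.natAbs.minFac : ℤ) ∣ (N.factorial : ℤ) :=
        Int.ofNat_dvd.mpr (Nat.dvd_factorial (Nat.minFac_pos _) hle)
      have h5 : (w.natAbs.minFac : ℤ) ∣ w - 1 := by
        have : (w - 1) = (N.factorial : ℤ) * (M * ((j+1) * h)) := by rw [hwdef]; ring
        rw [this]; exact hpfac.mul_right _
      have : (w.natAbs.minFac : ℤ) ∣ 1 := (dvd_sub hpw h5).trans (dvd_of_eq (by ring))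
      have := Int.le_of_dvd one_pos this
      have := (Nat.minFac_prime (show w.natAbs ≠ 1 by omega)).two_le
      omega
    · refine ⟨((f.coeff 0 * (M * N.factorial) * (j + 1) : ℤ) : ZMod w.natAbs.minFac), ?_, ?_⟩
      · rw [eval_intCast_map]
        simp only [Int.cast_id]
        rw [hfw]
        have h8 : ((w : ℤ) : ZMod w.natAbs.minFac) = 0 :=
          (ZMod.intCast_zmod_eq_zero_iff_dvd _ _).mpr hpw
        have h9 : ((f.coeff 0 * w : ℤ) : ZMod w.natAbs.minFac) = 0 := by
          rw [Int.cast_mul, h8, mul_zero]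
        simpa using h9
      · intro h4
        exact hpM ((ZMod.intCast_zmod_eq_zero_iff_dvd _ _).mp h4)

-- factoring through a subring containing the generators
lemma gen_factor {S : Type*} [CommRing S] {T : Type*} [CommRing T] {s : Finset S}
    (hs : Algebra.adjoin ℤ (s : Set S) = ⊤) (χ : S →+* T) (V : Subring T)
    (h : ∀ x ∈ s, χ x ∈ V) : ∀ z, χ z ∈ V := by
  intro z
  have h1 : Algebra.adjoin ℤ (s : Set S) ≤ subalgebraOfSubring (V.comap χ) := by
    apply Algebra.adjoin_le
    intro x hx
    exact h x hx
  rw [hs] at h1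
  exact h1 (Algebra.mem_top (A := S))

section
variable (S : Type*) [CommRing S] [IsDomain S] [Algebra.FiniteType ℤ S] [CharZero S]

-- chunk 1 : a hom to the algebraic closure of ℚ
lemma exists_hom_to_Qbar {s : Finset S} (hs : Algebra.adjoin ℤ (s : Set S) = ⊤) :
    Nonempty (S →+* AlgebraicClosure ℚ) := by
  classical
  let K := FractionRing S
  haveI : CharZero K := charZero_of_injective_algebraMap
    (IsFractionRing.injective S K)
  let E : MvPolynomial (s : Set S) ℚ →ₐ[ℚ] K :=
    MvPolynomial.aeval (fun i => algebraMap S K i.1)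
  let A : Subalgebra ℚ K := E.range
  have hmem : ∀ x ∈ s, algebraMap S K x ∈ A.toSubring := by
    intro x hx
    exact ⟨MvPolynomial.X ⟨x, hx⟩, by simp [E]⟩
  have hmem' : ∀ z, algebraMap S K z ∈ A :=
    gen_factor hs (algebraMap S K) A.toSubring hmem
  let ρ : S →+* A := (algebraMap S K).codRestrict A.toSubring hmem'
  haveI : IsDomain A.toSubring := inferInstance
  haveI : Nontrivial A.toSubring := inferInstance
  haveI : Algebra.FiniteType ℚ A :=
    Algebra.FiniteType.of_surjective E.rangeRestrict
      (AlgHom.rangeRestrict_surjective E)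
  obtain ⟨m, hm⟩ := Ideal.exists_maximal A
  haveI := hm
  let F := A ⧸ m
  haveI : m.IsPrime := hm.isPrime
  haveI : IsDomain F := Ideal.Quotient.isDomain m
  haveI : Algebra.FiniteType ℚ F :=
    Algebra.FiniteType.of_surjective (Ideal.Quotient.mkₐ ℚ m)
      (Ideal.Quotient.mkₐ_surjective ℚ m)
  haveI : Module.Finite ℚ F :=
    letI : Field F := Ideal.Quotient.field m
    finite_of_finite_type_of_isJacobsonRing ℚ F
  haveI : Algebra.IsAlgebraic ℚ F := Algebra.IsAlgebraic.of_finite ℚ F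
  haveI : NoZeroSMulDivisors ℚ F :=
    inferInstance
  let emb : F →ₐ[ℚ] AlgebraicClosure ℚ := IsAlgClosed.lift
  exact ⟨emb.toRingHom.comp ((Ideal.Quotient.mk m).comp ρ)⟩
end

section
variable {S : Type*} [CommRing S]

-- chunk 2 setup: reduce to data (θ, M, g) with θ integral
lemma exists_theta (s : Finset S) (φ : S →+* AlgebraicClosure ℚ) :
    ∃ θ : AlgebraicClosure ℚ, IsIntegral ℤ θ ∧ ∃ M : ℤ, M ≠ 0 ∧
      ∀ x ∈ s, (M : AlgebraicClosure ℚ) * φ x ∈ Algebra.adjoin ℤ {θ} := by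
  classical
  set Q := AlgebraicClosure ℚ
  haveI : Algebra.IsIntegral ℚ Q := ⟨fun x => ((AlgebraicClosure.isAlgebraic ℚ).isAlgebraic x).isIntegral⟩
  let F' : IntermediateField ℚ Q := IntermediateField.adjoin ℚ (φ '' (s : Set S))
  haveI : Finite (φ '' (s : Set S) : Set Q) := (s.finite_toSet.image φ).to_subtype
  haveI : FiniteDimensional ℚ F' :=
    IntermediateField.finiteDimensional_adjoin (fun x _ => Algebra.IsIntegral.isIntegral x)
  obtain ⟨α, hα⟩ := Field.exists_primitive_element ℚ F'
  -- the images lie in Algebra.adjoin ℚ {α.val}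
  have hC1 : ∀ x ∈ s, φ x ∈ Algebra.adjoin ℚ {(α : Q)} := by
    intro x hx
    have h1 : φ x ∈ F' := IntermediateField.subset_adjoin ℚ _ ⟨x, hx, rfl⟩
    have h2 : (⟨φ x, h1⟩ : F') ∈ Algebra.adjoin ℚ {α} := by
      rw [← IntermediateField.adjoin_simple_toSubalgebra_of_isAlgebraic
        (IsIntegral.of_finite ℚ α).isAlgebraic, hα]
      trivial
    have h3 : φ x ∈ (Algebra.adjoin ℚ {α}).map F'.val :=
      Subalgebra.mem_map.mpr ⟨_, h2, rfl⟩
    have h4 := AlgHom.map_adjoin F'.val {α}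
    rw [Set.image_singleton] at h4
    exact h4.le h3
  -- make α integral over ℤ by scaling
  have halg : IsAlgebraic ℤ (α : Q) := by
    rw [IsFractionRing.isAlgebraic_iff ℤ ℚ Q]
    exact Algebra.IsAlgebraic.isAlgebraic _
  obtain ⟨c, hc0, hcy⟩ := halg.exists_integral_multiple
  refine ⟨algebraMap ℤ Q c * α, by rw [← Algebra.smul_def]; exact hcy, ?_⟩
  -- adjoin ℚ {α} = adjoin ℚ {cα}
  have hcast : algebraMap ℤ Q c = algebraMap ℚ Q (c : ℚ) := by
    rw [IsScalarTower.algebraMap_apply ℤ ℚ Q]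
    norm_num
  have hcQ : (c : ℚ) ≠ 0 := by exact_mod_cast hc0
  have hadj : Algebra.adjoin ℚ {(α : Q)} = Algebra.adjoin ℚ {algebraMap ℤ Q c * α} := by
    apply le_antisymm
    · rw [Algebra.adjoin_le_iff]
      rintro z (rfl : z = (α : Q))
      have h5 : (α : Q) = algebraMap ℚ Q (c : ℚ)⁻¹ * (algebraMap ℤ Q c * α) := by
        rw [hcast, ← mul_assoc, ← map_mul, inv_mul_cancel₀ hcQ, map_one, one_mul]
      have hin : algebraMap ℚ Q (c : ℚ)⁻¹ * (algebraMap ℤ Q c * α)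
          ∈ Algebra.adjoin ℚ {algebraMap ℤ Q c * (α : Q)} :=
        mul_mem (Subalgebra.algebraMap_mem _ _) (Algebra.subset_adjoin rfl)
      rwa [← h5] at hin
    · rw [Algebra.adjoin_le_iff]
      rintro z (rfl : z = _)
      rw [hcast]
      exact mul_mem (Subalgebra.algebraMap_mem _ _) (Algebra.subset_adjoin rfl)
  -- choose polynomials g_x and clear denominators
  have hgex : ∀ x ∈ s, ∃ (Mx : ℤ), Mx ≠ 0 ∧
      (Mx : Q) * φ x ∈ Algebra.adjoin ℤ {algebraMap ℤ Q c * α} := by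
    intro x hx
    have h6 : φ x ∈ Algebra.adjoin ℚ {algebraMap ℤ Q c * α} := by
      rw [← hadj]; exact hC1 x hx
    rw [Algebra.adjoin_singleton_eq_range_aeval] at h6
    obtain ⟨g, hg⟩ := h6
    have hg' : Polynomial.aeval (algebraMap ℤ Q c * (α : Q)) g = φ x := hg
    obtain ⟨b, hb⟩ := IsLocalization.integerNormalization_map_to_map (nonZeroDivisors ℤ) g
    refine ⟨b, nonZeroDivisors.coe_ne_zero b, ?_⟩
    have hb' : Polynomial.map (algebraMap ℤ ℚ)
        (IsLocalization.integerNormalization (nonZeroDivisors ℤ) g) = ((b : ℤ) : ℚ) • g := by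
      rw [hb, Int.cast_smul_eq_zsmul]
    have h7 : ((b : ℤ) : Q) * φ x =
        Polynomial.aeval (algebraMap ℤ Q c * α)
          (IsLocalization.integerNormalization (nonZeroDivisors ℤ) g) := by
      rw [← Polynomial.aeval_map_algebraMap (R := ℤ) (A := ℚ), hb', map_smul,
        Algebra.smul_def, hg']
      congr 1
    rw [h7, Algebra.adjoin_singleton_eq_range_aeval]
    exact ⟨_, rfl⟩
  choose Mx hMx0 hMxmem using hgex
  refine ⟨(s.attach.prod fun i => Mx i.1 i.2), ?_, ?_⟩
  · apply Finset.prod_ne_zero_iff.mpr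
    intro i _
    exact hMx0 i.1 i.2
  · intro x hx
    have h8 : (s.attach.prod fun i => Mx i.1 i.2) =
        Mx x hx * ((s.attach.erase ⟨x, hx⟩).prod fun i => Mx i.1 i.2) := by
      rw [← Finset.prod_erase_mul _ _ (Finset.mem_attach s ⟨x, hx⟩)]
      ring
    rw [h8]
    push_cast
    have : ((Mx x hx : ℤ) : Q) * (((s.attach.erase ⟨x, hx⟩).prod fun i => (Mx i.1 i.2)) : Q)
        * φ x = (((s.attach.erase ⟨x, hx⟩).prod fun i => (Mx i.1 i.2) : ℤ) : Q)
        * (((Mx x hx : ℤ) : Q) * φ x) := by push_cast; ring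
    rw [this]
    exact mul_mem (Subalgebra.algebraMap_mem' _ _) (hMxmem x hx)
end

lemma exists_hom_of_theta {S : Type*} [CommRing S] {s : Finset S}
    (hs : Algebra.adjoin ℤ (s : Set S) = ⊤) (φ : S →+* AlgebraicClosure ℚ)
    {θ : AlgebraicClosure ℚ} (hθ : IsIntegral ℤ θ) {M : ℤ} (hM : M ≠ 0)
    (hmem : ∀ x ∈ s, (M : AlgebraicClosure ℚ) * φ x ∈ Algebra.adjoin ℤ {θ}) (N : ℕ) :
    ∃ p : ℕ, N < p ∧ p.Prime ∧ Nonempty (S →+* ZMod p) := by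
  classical
  haveI : NoZeroSMulDivisors ℤ (AlgebraicClosure ℚ) :=
    by
      have := (Module.isTorsionFree_iff_algebraMap_injective (R := ℤ)
        (A := AlgebraicClosure ℚ)).mpr (fun a b hab => by simpa using hab)
      infer_instance
  have hfdeg : 1 ≤ (minpoly ℤ θ).natDegree := minpoly.natDegree_pos hθ
  obtain ⟨p, hpN, hpp, x, hroot, hMp⟩ := exists_prime_root (minpoly ℤ θ) hfdeg M hM N
  haveI : Fact p.Prime := ⟨hpp⟩
  refine ⟨p, hpN, hpp, ?_⟩
  set O := Algebra.adjoin ℤ ({θ} : Set (AlgebraicClosure ℚ)) with hO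
  have hroot' : (minpoly ℤ θ).eval₂ (Int.castRingHom (ZMod p)) x = 0 := by
    rwa [eval₂_eq_eval_map]
  let e : AdjoinRoot (minpoly ℤ θ) ≃ₐ[ℤ] O := minpoly.equivAdjoin hθ
  let ψ₁ : O →+* ZMod p :=
    (AdjoinRoot.lift (Int.castRingHom (ZMod p)) x hroot').comp e.symm.toRingEquiv.toRingHom
  have hψ₁M : ψ₁ ((M : O)) = (M : ZMod p) := by rw [map_intCast]
  set u : O := (M : O) with hu
  have huval : (O.val.toRingHom u) = (M : AlgebraicClosure ℚ) := by
    rw [hu]; exact map_intCast _ M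
  have hMQ : (M : AlgebraicClosure ℚ) ≠ 0 := by exact_mod_cast hM
  have hu0 : u ≠ 0 := by
    intro h0
    apply hMQ
    rw [← huval, h0, map_zero]
  set B := Localization.Away u with hB
  have hval : ∀ y : Submonoid.powers u, IsUnit (O.val.toRingHom y) := by
    rintro ⟨y, k, rfl⟩
    rw [map_pow]
    exact (isUnit_iff_ne_zero.mpr (by rw [huval]; exact hMQ)).pow k
  let ι : B →+* AlgebraicClosure ℚ := IsLocalization.lift hval
  have hinj : Function.Injective ι := by
    have h0 : ∀ z : B, ι z = 0 → z = 0 := by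
      intro z hz
      obtain ⟨⟨r, w⟩, hzw⟩ := IsLocalization.surj (Submonoid.powers u) z
      have h1 := congrArg ι hzw
      rw [map_mul, IsLocalization.lift_eq, hz, zero_mul] at h1
      rw [IsLocalization.lift_eq] at h1
      have h2 : (r : O) = 0 := by
        have h2' : O.val.toRingHom r = 0 := by simpa using h1.symm
        exact Subtype.ext (by simpa using h2')
      rw [h2, map_zero] at hzw
      have h3 := IsLocalization.map_units B w
      exact (h3.mul_left_eq_zero).mp hzw
    intro a b hab
    have := h0 (a - b) (by rw [map_sub, hab, sub_self])
    exact sub_eq_zero.mp this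
  have hmemV : ∀ z ∈ s, φ z ∈ ι.range := by
    intro z hz
    have hOz : (M : AlgebraicClosure ℚ) * φ z ∈ O := hmem z hz
    refine ⟨IsLocalization.mk' B (⟨(M : AlgebraicClosure ℚ) * φ z, hOz⟩ : O)
      ⟨u, Submonoid.mem_powers u⟩, ?_⟩
    have hspec := IsLocalization.mk'_spec B (⟨(M : AlgebraicClosure ℚ) * φ z, hOz⟩ : O)
      ⟨u, Submonoid.mem_powers u⟩
    have h1 := congrArg ι hspec
    rw [map_mul, IsLocalization.lift_eq, IsLocalization.lift_eq] at h1
    have hval2 : O.val.toRingHom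
        (((⟨u, Submonoid.mem_powers u⟩ : Submonoid.powers u) : O)) =
        (M : AlgebraicClosure ℚ) := huval
    rw [hval2] at h1
    exact mul_right_cancel₀ hMQ (h1.trans (mul_comm _ _))
  have hall := gen_factor hs φ ι.range hmemV
  let φ' : S →+* ι.range := φ.codRestrict ι.range hall
  let iso : B ≃+* ι.range := RingEquiv.ofBijective ι.rangeRestrict
    ⟨fun a b hab => hinj (Subtype.ext_iff.mp hab), ι.rangeRestrict_surjective⟩
  have hψpow : ∀ y : Submonoid.powers u, IsUnit (ψ₁ y) := by
    rintro ⟨y, k, rfl⟩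
    rw [map_pow]
    exact (isUnit_iff_ne_zero.mpr (by rw [hψ₁M]; exact hMp)).pow k
  let ψ₂ : B →+* ZMod p := IsLocalization.lift hψpow
  exact ⟨ψ₂.comp ((iso.symm : ι.range ≃+* B).toRingHom.comp φ')⟩


theorem exists_inf_many_primes_hom_to_Fp
    (S : Type*) [CommRing S] [IsDomain S] [Algebra.FiniteType ℤ S] [CharZero S] :
    ∀ N : ℕ, ∃ p : ℕ, N < p ∧ p.Prime ∧ Nonempty (S →+* ZMod p) := by
  intro N
  obtain ⟨s, hs⟩ := (inferInstance : Algebra.FiniteType ℤ S).out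
  obtain ⟨φ⟩ := exists_hom_to_Qbar S hs
  obtain ⟨θ, hθ, M, hM, hmem⟩ := exists_theta s φ
  exact exists_hom_of_theta hs φ hθ hM hmem N
end

section
/- Let k be a field of characteristic p > 0, let t̄₁,…,t̄ₙ ∈ k, let v̄(h) = ∏ᵢ₌₁ⁿ (h − t̄ᵢ), and let A(v̄) be the generalized Weyl algebra over k generated by x, y, h with relations xy = v̄(h), yx = v̄(h−1), hx = x(h+1), hy = y(h−1). Then the elements xᵖ, yᵖ, and hᵖ − h are central in A(v̄), and they satisfy the relation xᵖ yᵖ = ∏ᵢ₌₁ⁿ ((hᵖ − h) − (t̄ᵢᵖ − t̄ᵢ)). -/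
open FreeAlgebra Polynomial

/-- The defining relations of the generalized Weyl algebra `A(v̄)` for
`v̄(h) = ∏ i, (h - t̄ i)`: generators `x = ι 0`, `y = ι 1`, `h = ι 2` with
`x y = v̄(h)`, `y x = v̄(h-1)`, `h x = x (h+1)`, `h y = y (h-1)`. -/
inductive GWARel (K : Type) [CommRing K] {n : ℕ} (t : Fin n → K) :
    FreeAlgebra K (Fin 3) → FreeAlgebra K (Fin 3) → Prop
  | xy : GWARel K t (ι K 0 * ι K 1) (aeval (ι K 2) (∏ i, (X - C (t i))))
  | yx : GWARel K t (ι K 1 * ι K 0) (aeval (ι K 2 - 1) (∏ i, (X - C (t i))))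
  | hx : GWARel K t (ι K 2 * ι K 0) (ι K 0 * (ι K 2 + 1))
  | hy : GWARel K t (ι K 2 * ι K 1) (ι K 1 * (ι K 2 - 1))

/-- The generalized Weyl algebra `A(v̄)`, `v̄(h) = ∏ i, (h - t̄ i)`. -/
abbrev GWA (K : Type) [CommRing K] {n : ℕ} (t : Fin n → K) := RingQuot (GWARel K t)

/-- The generator `x` of the generalized Weyl algebra. -/
noncomputable def GWAx (K : Type) [CommRing K] {n : ℕ} (t : Fin n → K) : GWA K t :=
  RingQuot.mkRingHom (GWARel K t) (ι K 0)

/-- The generator `y` of the generalized Weyl algebra. -/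
noncomputable def GWAy (K : Type) [CommRing K] {n : ℕ} (t : Fin n → K) : GWA K t :=
  RingQuot.mkRingHom (GWARel K t) (ι K 1)

/-- The generator `h` of the generalized Weyl algebra. -/
noncomputable def GWAh (K : Type) [CommRing K] {n : ℕ} (t : Fin n → K) : GWA K t :=
  RingQuot.mkRingHom (GWARel K t) (ι K 2)


section ShiftOps
variable {k : Type} [Field k]

noncomputable def Sh (c : k) : k[X] →ₐ[k] k[X] := aeval (X + C c)

lemma Sh_Sh (a b : k) (f : k[X]) : Sh a (Sh b f) = Sh (a + b) f := by
  have : (Sh a).comp (Sh b) = Sh (a + b) := by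
    apply Polynomial.algHom_ext
    simp [Sh]
    ring
  exact DFunLike.congr_fun this f

lemma Sh_zero (f : k[X]) : Sh (0 : k) f = f := by
  have : Sh (0 : k) = AlgHom.id k k[X] := by
    apply Polynomial.algHom_ext; simp [Sh]
  rw [this]; rfl

lemma aeval_Sh {A : Type} [Ring A] [Algebra k A] (z : A) (c : k) (f : k[X]) :
    aeval z (Sh c f) = aeval (z + algebraMap k A c) f := by
  have : (aeval z : k[X] →ₐ[k] A).comp (Sh c) = aeval (z + algebraMap k A c) := by
    apply Polynomial.algHom_ext
    simp [Sh]
  exact DFunLike.congr_fun this f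

end ShiftOps

section Abstract
variable {k : Type} [Field k] {A : Type} [Ring A] [Algebra k A]
variable {gx gy gh : A} {W : k[X]}

lemma hpow_x (Rhx : gh * gx = gx * (gh + 1)) (m : ℕ) :
    gh ^ m * gx = gx * (gh + 1) ^ m := by
  induction m with
  | zero => simp
  | succ m ih => rw [pow_succ', mul_assoc, ih, ← mul_assoc, Rhx, mul_assoc, ← pow_succ']

lemma hpow_y (Rhy : gh * gy = gy * (gh - 1)) (m : ℕ) :
    gh ^ m * gy = gy * (gh - 1) ^ m := by
  induction m with
  | zero => simp
  | succ m ih => rw [pow_succ', mul_assoc, ih, ← mul_assoc, Rhy, mul_assoc, ← pow_succ']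

lemma step_x (Rhx : gh * gx = gx * (gh + 1)) (f : k[X]) :
    aeval gh f * gx = gx * aeval (gh + 1) f := by
  induction f using Polynomial.induction_on' with
  | add p q hp hq => rw [map_add, map_add, add_mul, mul_add, hp, hq]
  | monomial m c =>
    rw [aeval_monomial, aeval_monomial, mul_assoc, hpow_x Rhx m, ← mul_assoc,
      Algebra.commutes, mul_assoc]

lemma step_y (Rhy : gh * gy = gy * (gh - 1)) (f : k[X]) :
    aeval gh f * gy = gy * aeval (gh - 1) f := by
  induction f using Polynomial.induction_on' with
  | add p q hp hq => rw [map_add, map_add, add_mul, mul_add, hp, hq]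
  | monomial m c =>
    rw [aeval_monomial, aeval_monomial, mul_assoc, hpow_y Rhy m, ← mul_assoc,
      Algebra.commutes, mul_assoc]

lemma step_x' (Rhx : gh * gx = gx * (gh + 1)) (f : k[X]) :
    aeval gh f * gx = gx * aeval gh (Sh 1 f) := by
  rw [step_x Rhx, aeval_Sh]; simp

lemma step_y' (Rhy : gh * gy = gy * (gh - 1)) (f : k[X]) :
    aeval gh f * gy = gy * aeval gh (Sh (-1) f) := by
  rw [step_y Rhy, aeval_Sh]; simp [sub_eq_add_neg]

lemma step_pow_x (Rhx : gh * gx = gx * (gh + 1)) (f : k[X]) (m : ℕ) :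
    aeval gh f * gx ^ m = gx ^ m * aeval gh (Sh ((m : ℕ) : k) f) := by
  induction m with
  | zero => simp [Sh_zero]
  | succ m ih =>
    rw [pow_succ, ← mul_assoc, ih, mul_assoc, step_x' Rhx, Sh_Sh, ← mul_assoc, ← pow_succ]
    norm_num [add_comm]

lemma step_pow_y (Rhy : gh * gy = gy * (gh - 1)) (f : k[X]) (m : ℕ) :
    aeval gh f * gy ^ m = gy ^ m * aeval gh (Sh (-((m : ℕ) : k)) f) := by
  induction m with
  | zero => simp [Sh_zero]
  | succ m ih =>
    rw [pow_succ, ← mul_assoc, ih, mul_assoc, step_y' Rhy, Sh_Sh, ← mul_assoc, ← pow_succ]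
    congr 2
    push_cast
    ring

lemma aeval_sub1 (f : k[X]) : aeval gh (Sh (-1 : k) f) = aeval (gh - 1) f := by
  rw [aeval_Sh]; simp [sub_eq_add_neg]

lemma killer_x (Rhx : gh * gx = gx * (gh + 1))
    (Rxy : gx * gy = aeval gh W) (Ryx : gy * gx = aeval (gh - 1) W) :
    gx * aeval gh (Sh 1 W - Sh (-1) W) = 0 := by
  rw [map_sub, mul_sub, ← step_x' Rhx, aeval_sub1, ← Rxy, mul_assoc, Ryx, sub_self]

lemma killer_y (Rhy : gh * gy = gy * (gh - 1))
    (Rxy : gx * gy = aeval gh W) (Ryx : gy * gx = aeval (gh - 1) W) :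
    aeval gh (Sh 1 W - Sh (-1) W) * gy = 0 := by
  have h1 : aeval gh (Sh (1 : k) W) * gy = aeval gh (Sh (-1 : k) W) * gy := by
    calc aeval gh (Sh (1 : k) W) * gy
        = gy * aeval gh (Sh (-1) (Sh 1 W)) := step_y' Rhy _
      _ = gy * aeval gh W := by rw [Sh_Sh]; norm_num [Sh_zero]
      _ = gy * (gx * gy) := by rw [Rxy]
      _ = (gy * gx) * gy := by rw [mul_assoc]
      _ = aeval (gh - 1) W * gy := by rw [Ryx]
      _ = aeval gh (Sh (-1) W) * gy := by rw [aeval_sub1]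
  rw [map_sub, sub_mul, h1, sub_self]

lemma vanish_x (Rhx : gh * gx = gx * (gh + 1))
    (Rxy : gx * gy = aeval gh W) (Ryx : gy * gx = aeval (gh - 1) W) :
    ∀ j : ℕ, gx ^ (j + 1) * aeval gh (Sh ((j : ℕ) : k) (Sh 1 W - Sh (-1) W)) = 0 := by
  intro j
  induction j with
  | zero => simpa [Sh_zero] using killer_x Rhx Rxy Ryx
  | succ j ih =>
    have hstep : gx * aeval gh (Sh (((j + 1 : ℕ)) : k) (Sh 1 W - Sh (-1) W))
        = aeval gh (Sh ((j : ℕ) : k) (Sh 1 W - Sh (-1) W)) * gx := by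
      rw [step_x' Rhx, Sh_Sh]
      norm_num [add_comm]
    rw [pow_succ, mul_assoc, hstep, ← mul_assoc, ih, zero_mul]

lemma vanish_y (Rhy : gh * gy = gy * (gh - 1))
    (Rxy : gx * gy = aeval gh W) (Ryx : gy * gx = aeval (gh - 1) W) :
    ∀ j : ℕ, aeval gh (Sh ((j : ℕ) : k) (Sh 1 W - Sh (-1) W)) * gy ^ (j + 1) = 0 := by
  intro j
  induction j with
  | zero => simpa [Sh_zero] using killer_y Rhy Rxy Ryx
  | succ j ih =>
    have hstep : aeval gh (Sh (((j + 1 : ℕ)) : k) (Sh 1 W - Sh (-1) W)) * gy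
        = gy * aeval gh (Sh ((j : ℕ) : k) (Sh 1 W - Sh (-1) W)) := by
      rw [step_y' Rhy, Sh_Sh]
      congr 2
      push_cast
      ring
    rw [pow_succ', ← mul_assoc, hstep, mul_assoc, ih, mul_zero]

lemma sum_shift (p : ℕ) [CharP k p] (U : k[X]) :
    ∑ j ∈ Finset.range p, Sh ((j : ℕ) : k) (Sh 1 U) = ∑ j ∈ Finset.range p, Sh ((j : ℕ) : k) U := by
  have hterm : ∀ j : ℕ, Sh ((j : ℕ) : k) (Sh 1 U) = Sh (((j + 1 : ℕ)) : k) U := by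
    intro j; rw [Sh_Sh]; norm_num [add_comm]
  calc ∑ j ∈ Finset.range p, Sh ((j : ℕ) : k) (Sh 1 U)
      = ∑ j ∈ Finset.range p, Sh (((j + 1 : ℕ)) : k) U := by
        exact Finset.sum_congr rfl fun j _ => hterm j
    _ = (∑ j ∈ Finset.range (p + 1), Sh ((j : ℕ) : k) U) - Sh ((0 : ℕ) : k) U := by
        rw [Finset.sum_range_succ' (fun j : ℕ => Sh ((j : ℕ) : k) U) p]
        abel
    _ = ∑ j ∈ Finset.range p, Sh ((j : ℕ) : k) U := by
        rw [Finset.sum_range_succ]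
        have : Sh ((p : ℕ) : k) U = Sh ((0 : ℕ) : k) U := by
          rw [CharP.cast_eq_zero k p]; norm_num
        rw [this]; abel

lemma sum_d_zero (p : ℕ) [CharP k p] (U : k[X]) :
    ∑ j ∈ Finset.range p, Sh ((j : ℕ) : k) (Sh 1 U - Sh (-1) U) = 0 := by
  have h1 : ∀ j : ℕ, Sh ((j : ℕ) : k) (Sh 1 U - Sh (-1) U)
      = Sh ((j : ℕ) : k) (Sh 1 U) - Sh ((j : ℕ) : k) (Sh (-1) U) := fun j => map_sub _ _ _
  rw [Finset.sum_congr rfl fun j _ => h1 j, Finset.sum_sub_distrib, sum_shift]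
  have h2 : ∑ j ∈ Finset.range p, Sh ((j : ℕ) : k) (Sh (-1) U)
      = ∑ j ∈ Finset.range p, Sh ((j : ℕ) : k) (Sh 1 (Sh (-1) U)) := (sum_shift p _).symm
  rw [h2]
  have h3 : Sh (1 : k) (Sh (-1) U) = U := by rw [Sh_Sh]; norm_num [Sh_zero]
  rw [h3, sub_self]

lemma shm_d (p m : ℕ) [CharP k p] (hpm : p = m + 1) (U : k[X]) :
    Sh ((m : ℕ) : k) (Sh 1 U - Sh (-1) U)
      = -∑ j ∈ Finset.range m, Sh ((j : ℕ) : k) (Sh 1 U - Sh (-1) U) := by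
  have h0 := sum_d_zero p U
  rw [hpm, Finset.sum_range_succ] at h0
  linear_combination h0

lemma xp_y_comm (p : ℕ) (hp : 0 < p) [CharP k p]
    (Rhx : gh * gx = gx * (gh + 1))
    (Rxy : gx * gy = aeval gh W) (Ryx : gy * gx = aeval (gh - 1) W) :
    gx ^ p * gy = gy * gx ^ p := by
  obtain ⟨m, rfl⟩ : ∃ m, p = m + 1 := ⟨p - 1, (Nat.succ_pred_eq_of_pos hp).symm⟩
  have hmk : ((m : ℕ) : k) = -1 := by
    have : (((m + 1 : ℕ)) : k) = 0 := CharP.cast_eq_zero k (m + 1)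
    push_cast at this
    exact eq_neg_of_add_eq_zero_left this
  -- x^(m+1) y = x^m * aeval gh W
  have h1 : gx ^ (m + 1) * gy = gx ^ m * aeval gh W := by
    rw [pow_succ, mul_assoc, Rxy]
  -- y x^(m+1) = x^m * aeval gh (Sh (-2) W)
  have h2 : gy * gx ^ (m + 1) = gx ^ m * aeval gh (Sh (-2) W) := by
    rw [pow_succ', ← mul_assoc, Ryx, ← aeval_sub1, step_pow_x Rhx, Sh_Sh, hmk]
    norm_num
  -- key vanishing
  have key : gx ^ m * aeval gh (Sh ((m : ℕ) : k) (Sh 1 W - Sh (-1) W)) = 0 := by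
    rw [shm_d (m + 1) m rfl W, map_neg, map_sum, mul_neg, Finset.mul_sum]
    rw [neg_eq_zero]
    apply Finset.sum_eq_zero
    intro j hj
    have hj' : j < m := Finset.mem_range.1 hj
    have hsplit : gx ^ m = gx ^ (m - 1 - j) * gx ^ (j + 1) := by
      rw [← pow_add]
      congr 1
      omega
    rw [hsplit, mul_assoc, vanish_x Rhx Rxy Ryx j, mul_zero]
  have hd : Sh ((m : ℕ) : k) (Sh 1 W - Sh (-1) W) = W - Sh (-2) W := by
    rw [hmk, map_sub, Sh_Sh, Sh_Sh]
    norm_num [Sh_zero]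
  have hsub : aeval gh W - aeval gh (Sh (-2) W) = aeval gh (W - Sh (-2) W) :=
    (map_sub (aeval gh : k[X] →ₐ[k] A) W (Sh (-2) W)).symm
  rw [h1, h2, ← sub_eq_zero, ← mul_sub, hsub, ← hd, key]

lemma x_yp_comm (p : ℕ) (hp : 0 < p) [CharP k p]
    (Rhy : gh * gy = gy * (gh - 1))
    (Rxy : gx * gy = aeval gh W) (Ryx : gy * gx = aeval (gh - 1) W) :
    gx * gy ^ p = gy ^ p * gx := by
  obtain ⟨m, rfl⟩ : ∃ m, p = m + 1 := ⟨p - 1, (Nat.succ_pred_eq_of_pos hp).symm⟩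
  have hmk : ((m : ℕ) : k) = -1 := by
    have : (((m + 1 : ℕ)) : k) = 0 := CharP.cast_eq_zero k (m + 1)
    push_cast at this
    exact eq_neg_of_add_eq_zero_left this

  have h1 : gx * gy ^ (m + 1) = gy ^ m * aeval gh (Sh 1 W) := by
    rw [pow_succ', ← mul_assoc, Rxy, step_pow_y Rhy, hmk]
    norm_num
  have h2 : gy ^ (m + 1) * gx = gy ^ m * aeval gh (Sh (-1) W) := by
    rw [pow_succ, mul_assoc, Ryx, aeval_sub1]
  have key : aeval gh (Sh ((m : ℕ) : k) (Sh 1 W - Sh (-1) W)) * gy ^ m = 0 := by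
    rw [shm_d (m + 1) m rfl W, map_neg, map_sum, neg_mul, Finset.sum_mul, neg_eq_zero]
    apply Finset.sum_eq_zero
    intro j hj
    have hj' : j < m := Finset.mem_range.1 hj
    have hsplit : gy ^ m = gy ^ (j + 1) * gy ^ (m - 1 - j) := by
      rw [← pow_add]
      congr 1
      omega
    rw [hsplit, ← mul_assoc, vanish_y Rhy Rxy Ryx j, zero_mul]
  have key2 : gy ^ m * aeval gh (Sh 1 W - Sh (-1) W) = 0 := by
    have h3 := step_pow_y Rhy (Sh ((m : ℕ) : k) (Sh 1 W - Sh (-1) W)) m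
    rw [key, Sh_Sh] at h3
    have h4 : -((m : ℕ) : k) + ((m : ℕ) : k) = 0 := by ring
    rw [h4, Sh_zero] at h3
    exact h3.symm
  have hsub : aeval gh (Sh (1 : k) W) - aeval gh (Sh (-1 : k) W)
      = aeval gh (Sh 1 W - Sh (-1) W) :=
    (map_sub (aeval gh : k[X] →ₐ[k] A) _ _).symm
  rw [h1, h2, ← sub_eq_zero, ← mul_sub, hsub, key2]

lemma hpow_comm_x (p : ℕ) [CharP k p] (Rhx : gh * gx = gx * (gh + 1)) :
    gh * gx ^ p = gx ^ p * gh := by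
  have h1 := step_pow_x Rhx (X : k[X]) p
  have h2 : Sh (((p : ℕ)) : k) (X : k[X]) = X := by
    simp [Sh, CharP.cast_eq_zero k p]
  rw [h2, aeval_X] at h1
  exact h1

lemma hpow_comm_y (p : ℕ) [CharP k p] (Rhy : gh * gy = gy * (gh - 1)) :
    gh * gy ^ p = gy ^ p * gh := by
  have h1 := step_pow_y Rhy (X : k[X]) p
  have h2 : Sh (-((p : ℕ) : k)) (X : k[X]) = X := by
    simp [Sh, CharP.cast_eq_zero k p]
  rw [h2, aeval_X] at h1
  exact h1

lemma Sh_one_frob (p : ℕ) [Fact p.Prime] [CharP k p] :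
    Sh (1 : k) ((X : k[X]) ^ p - X) = X ^ p - X := by
  have hx : Sh (1 : k) (X : k[X]) = X + C 1 := by simp [Sh]
  rw [map_sub, map_pow, hx, add_pow_char]
  simp

lemma Sh_negone_frob (p : ℕ) [Fact p.Prime] [CharP k p] :
    Sh (-1 : k) ((X : k[X]) ^ p - X) = X ^ p - X := by
  have hx : Sh (-1 : k) (X : k[X]) = X - C 1 := by
    simp [Sh, sub_eq_add_neg]
  rw [map_sub, map_pow, hx, sub_pow_char]
  simp

lemma central_comm_x (p : ℕ) [Fact p.Prime] [CharP k p]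
    (Rhx : gh * gx = gx * (gh + 1)) :
    (gh ^ p - gh) * gx = gx * (gh ^ p - gh) := by
  have hc : gh ^ p - gh = aeval gh ((X : k[X]) ^ p - X) := by simp
  rw [hc, step_x' Rhx, Sh_one_frob]

lemma central_comm_y (p : ℕ) [Fact p.Prime] [CharP k p]
    (Rhy : gh * gy = gy * (gh - 1)) :
    (gh ^ p - gh) * gy = gy * (gh ^ p - gh) := by
  have hc : gh ^ p - gh = aeval gh ((X : k[X]) ^ p - X) := by simp
  rw [hc, step_y' Rhy, Sh_negone_frob]

lemma central_comm_h (p : ℕ) : (gh ^ p - gh) * gh = gh * (gh ^ p - gh) := by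
  rw [sub_mul, mul_sub, ← pow_succ, ← pow_succ']

lemma xm_ym (Rhx : gh * gx = gx * (gh + 1)) (Rxy : gx * gy = aeval gh W) :
    ∀ m : ℕ, gx ^ m * gy ^ m
      = aeval gh (∏ j ∈ Finset.range m, Sh (-((j : ℕ) : k)) W) := by
  intro m
  induction m with
  | zero => simp
  | succ m ih =>
    have hassoc : gx ^ (m + 1) * gy ^ (m + 1) = gx * (gx ^ m * gy ^ m) * gy := by
      rw [pow_succ', pow_succ]
      noncomm_ring
    rw [hassoc, ih]
    set Pm := ∏ j ∈ Finset.range m, Sh (-((j : ℕ) : k)) W with hPm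
    have hswap : gx * aeval gh Pm = aeval gh (Sh (-1) Pm) * gx := by
      rw [step_x' Rhx, Sh_Sh]
      norm_num [Sh_zero]
    rw [mul_assoc, ← mul_assoc gx, hswap, mul_assoc, Rxy, ← map_mul]
    congr 1
    rw [hPm, map_prod, Finset.prod_range_succ' (fun j : ℕ => Sh (-((j : ℕ) : k)) W) m]
    congr 1
    · apply Finset.prod_congr rfl
      intro j _
      rw [Sh_Sh]
      congr 1
      push_cast
      ring
    · norm_num [Sh_zero]

-- CORE identity
lemma core_prod (p : ℕ) [Fact p.Prime] [CharP k p] :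
    ∏ j ∈ Finset.range p, (X - C ((j : ℕ) : k)) = X ^ p - X := by
  have hp : p.Prime := Fact.out
  haveI : NeZero p := ⟨hp.ne_zero⟩
  -- the identity over ZMod p
  have hcard : Fintype.card (ZMod p) = p := ZMod.card p
  have hzm : ∏ a : ZMod p, (X - C a) = X ^ p - X := by
    have hroots := FiniteField.roots_X_pow_card_sub_X (ZMod p)
    rw [hcard] at hroots
    have hmonic : (X ^ p - X : (ZMod p)[X]).Monic := by
      apply (Polynomial.monic_X_pow p).sub_of_left
      rw [degree_X, degree_X_pow]
      exact_mod_cast hp.one_lt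
    have hdeg : (X ^ p - X : (ZMod p)[X]).natDegree = p :=
      FiniteField.X_pow_card_sub_X_natDegree_eq _ hp.one_lt
    have := Polynomial.prod_multiset_X_sub_C_of_monic_of_roots_card_eq hmonic
      (by rw [hroots, hdeg]; simpa using hcard)
    rw [hroots] at this
    rw [← this]
    rfl
  -- push to k via the cast hom
  set φ := ZMod.castHom (dvd_refl p) k with hφ
  have hmap := congrArg (Polynomial.map φ) hzm
  rw [Polynomial.map_sub, Polynomial.map_pow, Polynomial.map_X] at hmap
  have h2 : Polynomial.map φ (∏ a : ZMod p, (X - C a)) = ∏ a : ZMod p, (X - C (φ a)) := by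
    rw [show (Polynomial.map φ) (∏ a : ZMod p, (X - C a))
        = Polynomial.mapRingHom φ (∏ a : ZMod p, (X - C a)) from rfl, map_prod]
    simp
  rw [h2] at hmap
  rw [← hmap]
  refine Finset.prod_bij (fun j _ => ((j : ZMod p))) ?_ ?_ ?_ ?_
  · intro j hj; exact Finset.mem_univ _
  · intro i hi j hj hij
    simp only [Finset.mem_range] at hi hj
    have := congrArg ZMod.val hij
    rwa [ZMod.val_cast_of_lt hi, ZMod.val_cast_of_lt hj] at this
  · intro b _
    exact ⟨b.val, Finset.mem_range.2 (ZMod.val_lt b), by simp [ZMod.natCast_val, ZMod.cast_id]⟩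
  · intro j hj
    simp [map_natCast]

lemma per_i (p : ℕ) [Fact p.Prime] [CharP k p] (a : k) :
    ∏ j ∈ Finset.range p, Sh (-((j : ℕ) : k)) (X - C a)
      = X ^ p - X - C (a ^ p - a) := by
  have hterm : ∀ j : ℕ, Sh (-((j : ℕ) : k)) (X - C a)
      = aeval ((X : k[X]) - C a) (X - C ((j : ℕ) : k)) := by
    intro j
    simp [Sh]
    ring
  rw [Finset.prod_congr rfl fun j _ => hterm j,
    ← map_prod (aeval ((X : k[X]) - C a) : k[X] →ₐ[k] k[X]) (fun j : ℕ => X - C ((j : ℕ) : k)) (Finset.range p),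
    core_prod p, map_sub, map_pow, aeval_X, sub_pow_char]
  simp only [← C_pow]
  rw [C_sub]
  ring

lemma final_poly (p : ℕ) [Fact p.Prime] [CharP k p] {n : ℕ} (t : Fin n → k) :
    ∏ j ∈ Finset.range p, Sh (-((j : ℕ) : k)) (∏ i, (X - C (t i)))
      = aeval ((X : k[X]) ^ p - X) (∏ i, (X - C (t i ^ p - t i))) := by
  rw [map_prod (aeval ((X : k[X]) ^ p - X))]
  have h1 : ∀ j ∈ Finset.range p, Sh (-((j : ℕ) : k)) (∏ i, (X - C (t i)))
      = ∏ i, Sh (-((j : ℕ) : k)) (X - C (t i)) := fun j _ => map_prod _ _ _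
  rw [Finset.prod_congr rfl h1, Finset.prod_comm]
  apply Finset.prod_congr rfl
  intro i _
  rw [per_i p (t i)]
  simp [sub_sub]

end Abstract

section Assembly
variable {k : Type} [Field k] {n : ℕ} {t : Fin n → k}

noncomputable def mkA (t : Fin n → k) : FreeAlgebra k (Fin 3) →ₐ[k] GWA k t :=
  RingQuot.mkAlgHom k (GWARel k t)

lemma mk_eq (a : FreeAlgebra k (Fin 3)) :
    RingQuot.mkRingHom (GWARel k t) a = mkA t a := by
  rw [mkA, ← RingQuot.mkAlgHom_coe k (GWARel k t)]
  rfl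

lemma gx_def : GWAx k t = mkA t (ι k 0) := mk_eq _
lemma gy_def : GWAy k t = mkA t (ι k 1) := mk_eq _
lemma gh_def : GWAh k t = mkA t (ι k 2) := mk_eq _

/-- the polynomial v̄ -/
noncomputable def VV (t : Fin n → k) : k[X] := ∏ i, (X - C (t i))

lemma Rhx : GWAh k t * GWAx k t = GWAx k t * (GWAh k t + 1) := by
  have h1 := RingQuot.mkAlgHom_rel k (GWARel.hx (K := k) (t := t))
  rw [map_mul, map_mul, map_add, map_one] at h1
  rw [gx_def, gh_def]
  exact h1

lemma Rhy : GWAh k t * GWAy k t = GWAy k t * (GWAh k t - 1) := by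
  have h1 := RingQuot.mkAlgHom_rel k (GWARel.hy (K := k) (t := t))
  rw [map_mul, map_mul, map_sub, map_one] at h1
  rw [gy_def, gh_def]
  exact h1

lemma Rxy : GWAx k t * GWAy k t = aeval (GWAh k t) (VV t) := by
  have h1 := RingQuot.mkAlgHom_rel k (GWARel.xy (K := k) (t := t))
  rw [map_mul] at h1
  rw [gx_def, gy_def, gh_def, VV]
  simp only [mkA]
  rw [h1]
  exact (Polynomial.aeval_algHom_apply (RingQuot.mkAlgHom k (GWARel k t)) (ι k 2) _).symm

lemma Ryx : GWAy k t * GWAx k t = aeval (GWAh k t - 1) (VV t) := by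
  have h1 := RingQuot.mkAlgHom_rel k (GWARel.yx (K := k) (t := t))
  rw [map_mul] at h1
  rw [gx_def, gy_def, gh_def, VV]
  simp only [mkA]
  rw [h1]
  have h2 := (Polynomial.aeval_algHom_apply (RingQuot.mkAlgHom k (GWARel k t))
    (ι k 2 - 1) (∏ i, (X - C (t i)))).symm
  rw [map_sub, map_one] at h2
  exact h2

lemma central_of (z : GWA k t)
    (cx : z * GWAx k t = GWAx k t * z)
    (cy : z * GWAy k t = GWAy k t * z)
    (ch : z * GWAh k t = GWAh k t * z) :
    ∀ a : GWA k t, z * a = a * z := by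
  intro a
  obtain ⟨b, rfl⟩ := RingQuot.mkRingHom_surjective (GWARel k t) a
  rw [mk_eq]
  induction b using FreeAlgebra.induction with
  | grade0 r =>
    rw [AlgHom.commutes]
    exact (Algebra.commutes r z).symm
  | grade1 i =>
    fin_cases i
    · rw [show (⟨0, by norm_num⟩ : Fin 3) = 0 from rfl, ← gx_def]; exact cx
    · rw [show (⟨1, by norm_num⟩ : Fin 3) = 1 from rfl, ← gy_def]; exact cy
    · rw [show (⟨2, by norm_num⟩ : Fin 3) = 2 from rfl, ← gh_def]; exact ch
  | mul a b ha hb =>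
    rw [map_mul, ← mul_assoc, ha, mul_assoc, hb, ← mul_assoc]
  | add a b ha hb =>
    rw [map_add, mul_add, add_mul, ha, hb]

end Assembly

theorem GWA_center_char_p
    (k : Type) [Field k] (p : ℕ) (hp : 0 < p) [CharP k p]
    (n : ℕ) (t : Fin n → k) :
    (∀ a : GWA k t, GWAx k t ^ p * a = a * GWAx k t ^ p) ∧
    (∀ a : GWA k t, GWAy k t ^ p * a = a * GWAy k t ^ p) ∧
    (∀ a : GWA k t, (GWAh k t ^ p - GWAh k t) * a = a * (GWAh k t ^ p - GWAh k t)) ∧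
    GWAx k t ^ p * GWAy k t ^ p =
      aeval (GWAh k t ^ p - GWAh k t) (∏ i, (X - C (t i ^ p - t i))) := by
  haveI : NeZero p := ⟨hp.ne'⟩
  haveI : Fact p.Prime := CharP.char_is_prime_of_pos k p
  refine ⟨?_, ?_, ?_, ?_⟩
  · -- x^p central
    apply central_of
    · rw [← pow_succ, ← pow_succ']
    · exact xp_y_comm p hp Rhx Rxy Ryx
    · exact (hpow_comm_x (k := k) p Rhx).symm
  · -- y^p central
    apply central_of
    · exact (x_yp_comm p hp Rhy Rxy Ryx).symm
    · rw [← pow_succ, ← pow_succ']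
    · exact (hpow_comm_y (k := k) p Rhy).symm
  · -- h^p - h central
    apply central_of
    · exact central_comm_x (k := k) p Rhx
    · exact central_comm_y (k := k) p Rhy
    · exact central_comm_h p
  · -- the product identity
    have h1 := xm_ym (Rhx (k := k) (t := t)) Rxy p
    rw [h1]
    simp only [VV]
    rw [final_poly p t]
    have h2 := Polynomial.aeval_algHom_apply
      (Polynomial.aeval (GWAh k t) : k[X] →ₐ[k] GWA k t)
      ((X : k[X]) ^ p - X) (∏ i, (X - C (t i ^ p - t i)))
    rw [map_sub, map_pow, aeval_X] at h2
    exact h2.symm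
end

section
/- Let S be a commutative integral domain of characteristic zero that is finitely generated as a ℤ-algebra. Then there exist a positive integer l, a natural number n, and elements x₁,…,xₙ of the localization S[1/l] that are algebraically independent over ℚ, such that S[1/l] is integral over the ℤ[1/l]-subalgebra ℤ[1/l][x₁,…,xₙ] generated by x₁,…,xₙ. Equivalently, there is an injective ℤ[1/l]-algebra homomorphism from the polynomial ring ℤ[1/l][X₁,…,Xₙ] to S[1/l] such that S[1/l] is integral over its image. -/
set_option maxHeartbeats 1000000
set_option synthInstance.maxHeartbeats 1000000

lemma NN_digits_inj (r : ℕ) : ∀ (N : ℕ) (a b : Fin N → ℕ), (∀ j, a j < r) → (∀ j, b j < r) →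
    (∑ j, a j * r ^ (j:ℕ)) = (∑ j, b j * r ^ (j:ℕ)) → a = b := by
  intro N
  induction N with
  | zero => intro a b _ _ _; funext j; exact absurd j.2 (Nat.not_lt_zero _)
  | succ N ih =>
    intro a b ha hb hsum
    have hr : 0 < r := lt_of_le_of_lt (Nat.zero_le _) (ha 0)
    rw [Fin.sum_univ_succ, Fin.sum_univ_succ] at hsum
    simp only [Fin.val_zero, pow_zero, mul_one, Fin.val_succ] at hsum
    have key : ∀ c : Fin (N+1) → ℕ, (∑ j : Fin N, c j.succ * r ^ ((j:ℕ)+1))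
        = r * (∑ j : Fin N, c j.succ * r ^ (j:ℕ)) := by
      intro c
      rw [Finset.mul_sum]
      congr 1; funext j; ring
    rw [key a, key b] at hsum
    have h0 : a 0 = b 0 := by
      have := congrArg (· % r) hsum
      simpa [Nat.add_mul_mod_self_left, Nat.mul_add_mod, Nat.mod_eq_of_lt (ha 0),
        Nat.mod_eq_of_lt (hb 0)] using this
    have htail : (∑ j : Fin N, a j.succ * r ^ (j:ℕ)) = ∑ j : Fin N, b j.succ * r ^ (j:ℕ) := by
      rw [h0] at hsum
      have := Nat.add_left_cancel hsum
      exact Nat.eq_of_mul_eq_mul_left hr this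
    have := ih (fun j => a j.succ) (fun j => b j.succ) (fun j => ha j.succ) (fun j => hb j.succ) htail
    funext j
    refine Fin.cases h0 (fun i => ?_) j
    exact congrFun this i

open Polynomial in
lemma NN_nagata {F : Type*} [Field F] {m : ℕ} {A : Type*} [CommRing A] [Algebra F A]
    (s : Fin (m+1) → A) (f : MvPolynomial (Fin (m+1)) F) (hf0 : f ≠ 0)
    (hfs : MvPolynomial.aeval s f = 0) :
    ∃ t : Fin m → A, (∀ i, t i ∈ Algebra.adjoin F (Set.range s)) ∧
      (∀ j, IsIntegral (Algebra.adjoin F (Set.range t)) (s j)) := by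
  classical
  set r : ℕ := f.totalDegree + 1 with hr
  set t : Fin m → A := fun i => s i.succ - s 0 ^ (r ^ ((i:ℕ)+1)) with ht
  have htmem : ∀ i, t i ∈ Algebra.adjoin F (Set.range s) := by
    intro i
    exact Subalgebra.sub_mem _ (Algebra.subset_adjoin (Set.mem_range_self i.succ))
      (Subalgebra.pow_mem _ (Algebra.subset_adjoin (Set.mem_range_self 0)) _)
  set P := Polynomial (MvPolynomial (Fin m) F) with hP
  set v : Fin (m+1) → P := fun j =>
    Fin.cases Polynomial.X (fun i => Polynomial.C (MvPolynomial.X i) + Polynomial.X ^ (r ^ ((i:ℕ)+1))) j with hv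
  have hrpos : 0 < r := Nat.succ_pos _
  have hv_monic : ∀ j, (v j).Monic := by
    intro j
    refine Fin.cases ?_ (fun i => ?_) j
    · simpa [hv] using monic_X
    · have h1 : (Polynomial.C (MvPolynomial.X (R := F) i)).degree < ((r ^ ((i:ℕ)+1) : ℕ) : WithBot ℕ) := by
        refine lt_of_le_of_lt degree_C_le ?_
        exact_mod_cast Nat.pow_pos hrpos
      simpa [hv, add_comm] using monic_X_pow_add h1
  have hv_deg : ∀ j, (v j).natDegree = r ^ (j:ℕ) := by
    intro j
    refine Fin.cases ?_ (fun i => ?_) j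
    · simp [hv]
    · simp only [hv, Fin.cases_succ, Fin.val_succ]
      rw [add_comm, natDegree_X_pow_add_C]
  set w : (Fin (m+1) →₀ ℕ) → ℕ := fun a => ∑ j, a j * r ^ (j:ℕ) with hw
  set M : (Fin (m+1) →₀ ℕ) → P := fun a => ∏ j, (v j) ^ (a j) with hM
  have hM_monic : ∀ a, (M a).Monic := fun a =>
    monic_prod_of_monic _ _ (fun j _ => (hv_monic j).pow _)
  have hM_deg : ∀ a, (M a).natDegree = w a := by
    intro a
    rw [hM, natDegree_prod_of_monic _ _ (fun j _ => (hv_monic j).pow _)]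
    refine Finset.sum_congr rfl fun j _ => ?_
    rw [(hv_monic j).natDegree_pow, hv_deg, mul_comm]
  have expand : MvPolynomial.aeval v f
      = ∑ a ∈ f.support, Polynomial.C (MvPolynomial.C (f.coeff a)) * M a := by
    conv_lhs => rw [f.as_sum]
    rw [map_sum]
    refine Finset.sum_congr rfl fun a _ => ?_
    rw [MvPolynomial.aeval_monomial, Finsupp.prod_pow]
    congr 1
  set D := f.support.sup w with hD
  obtain ⟨astar, hastar, hwD⟩ := Finset.exists_mem_eq_sup f.support
    (MvPolynomial.support_nonempty.mpr hf0) w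
  have hDval : D = w astar := by rw [hD, hwD]
  have hsmall : ∀ a ∈ f.support, ∀ j, a j < r := by
    intro a ha j
    have h1 : a j ≤ a.sum (fun _ e => e) := by
      by_cases hj : j ∈ a.support
      · exact Finset.single_le_sum (f := fun i => a i) (fun _ _ => Nat.zero_le _) hj
      · simp [Finsupp.notMem_support_iff.mp hj]
    exact lt_of_le_of_lt (h1.trans (MvPolynomial.le_totalDegree ha)) (Nat.lt_succ_self _)
  have hcoeffD : (MvPolynomial.aeval v f).coeff D = MvPolynomial.C (f.coeff astar) := by
    rw [expand, Polynomial.finset_sum_coeff]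
    rw [Finset.sum_eq_single astar]
    · rw [Polynomial.coeff_C_mul]
      have h2 : (M astar).coeff D = 1 := by
        have h1 : (M astar).natDegree = D := by rw [hM_deg, hDval]
        rw [← h1]; exact (hM_monic astar).coeff_natDegree
      rw [h2, mul_one]
    · intro a ha hne
      have hle : w a ≤ D := hD ▸ Finset.le_sup ha
      have hlt : w a < D := by
        rcases lt_or_eq_of_le hle with h | h
        · exact h
        · exfalso
          apply hne
          have h3 : (∑ j, (fun j => a j) j * r ^ (j:ℕ)) = ∑ j, (fun j => astar j) j * r ^ (j:ℕ) := by
            show w a = w astar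
            rw [h, hDval]
          have := NN_digits_inj r (m+1) (fun j => a j) (fun j => astar j)
            (hsmall a ha) (hsmall astar hastar) h3
          exact Finsupp.ext (fun j => congrFun this j)
      rw [Polynomial.coeff_C_mul, Polynomial.coeff_eq_zero_of_natDegree_lt, mul_zero]
      rw [hM_deg]; exact hlt
    · intro h; exact absurd hastar h
  have hcne : f.coeff astar ≠ 0 := MvPolynomial.mem_support_iff.mp hastar
  have hCcne : (MvPolynomial.C (f.coeff astar) : MvPolynomial (Fin m) F) ≠ 0 := by
    simpa using hcne
  have hdegle : (MvPolynomial.aeval v f).natDegree ≤ D := by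
    rw [expand]
    refine natDegree_sum_le_of_forall_le _ _ fun a ha => ?_
    refine le_trans (natDegree_C_mul_le _ _) ?_
    rw [hM_deg]; exact hD ▸ Finset.le_sup ha
  have hdeg : (MvPolynomial.aeval v f).natDegree = D :=
    le_antisymm hdegle (le_natDegree_of_ne_zero (hcoeffD ▸ hCcne))
  have hlc : (MvPolynomial.aeval v f).leadingCoeff = MvPolynomial.C (f.coeff astar) := by
    rw [leadingCoeff, hdeg, hcoeffD]
  -- evaluation
  set u : MvPolynomial (Fin m) F →ₐ[F] A := MvPolynomial.aeval t with hu
  set χ : P →ₐ[F] A := Polynomial.eval₂AlgHom u (s 0) (fun a => Commute.all _ _) with hχ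
  have hχφ : Polynomial.eval₂ u.toRingHom (s 0) (MvPolynomial.aeval v f) = 0 := by
    have hcomp : (χ.comp (MvPolynomial.aeval v) : MvPolynomial (Fin (m+1)) F →ₐ[F] A)
        = MvPolynomial.aeval s := by
      apply MvPolynomial.algHom_ext
      intro j
      refine Fin.cases ?_ (fun i => ?_) j
      · simp only [AlgHom.coe_comp, Function.comp_apply, MvPolynomial.aeval_X, hv,
          Fin.cases_zero, hχ]
        rw [Polynomial.eval₂AlgHom_apply, Polynomial.eval₂_X]
      · simp only [AlgHom.coe_comp, Function.comp_apply, MvPolynomial.aeval_X, hv,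
          Fin.cases_succ, hχ]
        rw [Polynomial.eval₂AlgHom_apply, Polynomial.eval₂_add, Polynomial.eval₂_C,
          Polynomial.eval₂_pow, Polynomial.eval₂_X]
        rw [hu]
        simp [ht]
    have h4 := congrArg (fun g => g f) hcomp
    simp only [AlgHom.coe_comp, Function.comp_apply] at h4
    rw [← h4] at hfs
    exact hfs
  have hint0 : RingHom.IsIntegralElem u.toRingHom
      (u.toRingHom (MvPolynomial.aeval v f).leadingCoeff * s 0) :=
    RingHom.isIntegralElem_leadingCoeff_mul _ _ _ hχφ
  rw [hlc] at hint0
  have hulc : u.toRingHom (MvPolynomial.C (f.coeff astar)) = algebraMap F A (f.coeff astar) := by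
    simp [hu]
  rw [hulc] at hint0
  set B := Algebra.adjoin F (Set.range t) with hB
  set t' : Fin m → B := fun i => ⟨t i, Algebra.subset_adjoin ⟨i, rfl⟩⟩ with ht'
  set u' : MvPolynomial (Fin m) F →ₐ[F] B := MvPolynomial.aeval t' with hu'
  have hfactor : (algebraMap B A).comp u'.toRingHom = u.toRingHom := by
    have h5 : (B.val.comp u' : MvPolynomial (Fin m) F →ₐ[F] A) = u := by
      apply MvPolynomial.algHom_ext
      intro i
      simp [hu', hu, ht']
    exact congrArg AlgHom.toRingHom h5
  have hconv : ∀ y : A, RingHom.IsIntegralElem u.toRingHom y → IsIntegral B y := by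
    rintro y ⟨p, pm, hp⟩
    refine ⟨p.map u'.toRingHom, pm.map _, ?_⟩
    rw [Polynomial.eval₂_map, hfactor]
    exact hp
  have hyint : IsIntegral B (algebraMap F A (f.coeff astar) * s 0) := hconv _ hint0
  have hs0 : IsIntegral B (s 0) := by
    refine IsIntegral.of_mul_unit (y := algebraMap F A (f.coeff astar))
      (r := algebraMap F B (f.coeff astar)⁻¹) ?_ ?_
    · rw [← IsScalarTower.algebraMap_apply, ← map_mul, inv_mul_cancel₀ hcne, map_one]
    · rwa [mul_comm]
  refine ⟨t, htmem, ?_⟩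
  intro j
  refine Fin.cases hs0 (fun i => ?_) j
  have hti : IsIntegral B (t i) := by
    exact isIntegral_algebraMap (x := t' i)
  have h6 : s i.succ = t i + s 0 ^ (r ^ ((i:ℕ)+1)) := by rw [ht]; ring
  rw [h6]
  exact hti.add (hs0.pow _)

lemma NN_field (F : Type*) [Field F] (m : ℕ) (A : Type*) [CommRing A] [Nontrivial A] [Algebra F A]
    (s : Fin m → A) :
    ∃ (n : ℕ) (x : Fin n → A), AlgebraicIndependent F x ∧
      (∀ k, x k ∈ Algebra.adjoin F (Set.range s)) ∧
      ∀ j, IsIntegral (Algebra.adjoin F (Set.range x)) (s j) := by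
  induction m with
  | zero =>
    refine ⟨0, fun k => k.elim0, ?_, fun k => k.elim0, fun j => j.elim0⟩
    rw [algebraicIndependent_empty_type_iff]
    exact (algebraMap F A).injective
  | succ m ih =>
    by_cases hAI : AlgebraicIndependent F s
    · refine ⟨m+1, s, hAI, fun k => Algebra.subset_adjoin (Set.mem_range_self k), fun j => ?_⟩
      have := isIntegral_algebraMap (A := A)
        (x := (⟨s j, Algebra.subset_adjoin (Set.mem_range_self j)⟩ : Algebra.adjoin F (Set.range s)))
      simpa using this
    · rw [algebraicIndependent_iff] at hAI
      push_neg at hAI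
      obtain ⟨f, hf1, hf2⟩ := hAI
      obtain ⟨t, htmem, htint⟩ := NN_nagata s f hf2 hf1
      obtain ⟨n, x, hx1, hx2, hx3⟩ := ih t
      refine ⟨n, x, hx1, ?_, ?_⟩
      · intro k
        have hle : Algebra.adjoin F (Set.range t) ≤ Algebra.adjoin F (Set.range s) := by
          apply Algebra.adjoin_le
          rintro _ ⟨i, rfl⟩
          exact htmem i
        exact hle (hx2 k)
      · set B₁ := Algebra.adjoin F (Set.range x) with hB₁
        set B₀ := Algebra.adjoin F (Set.range t) with hB₀
        have hle : B₁ ≤ B₀ := by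
          apply Algebra.adjoin_le
          rintro _ ⟨k, rfl⟩
          exact hx2 k
        have Hb : ∀ b ∈ B₀, IsIntegral B₁ b := by
          intro b hb
          induction hb using Algebra.adjoin_induction with
          | mem y hy =>
            obtain ⟨i, rfl⟩ := hy
            exact hx3 i
          | algebraMap c =>
            rw [IsScalarTower.algebraMap_apply F B₁ A]
            exact isIntegral_algebraMap
          | add y z _ _ hy hz => exact hy.add hz
          | mul y z _ _ hy hz => exact hy.mul hz
        set IC := integralClosure B₁ A with hIC
        let ρ : B₀ →+* IC :=
          { toFun := fun b => ⟨(b : A), Hb (b : A) b.2⟩,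
            map_one' := rfl, map_mul' := fun _ _ => rfl,
            map_zero' := rfl, map_add' := fun _ _ => rfl }
        have hρ : (algebraMap IC A).comp ρ = algebraMap B₀ A := by
          ext b
          simp only [RingHom.coe_comp, Function.comp_apply, Subalgebra.algebraMap_eq]
          rfl
        intro j
        obtain ⟨p, pm, hp⟩ := htint j
        have hICint : IsIntegral IC (s j) := by
          refine ⟨p.map ρ, pm.map _, ?_⟩
          rw [Polynomial.eval₂_map, hρ]
          exact hp
        exact isIntegral_trans (R := B₁) (A := IC) (s j) hICint

lemma NN_denom {K : Type*} [Field K] [CharZero K] (X : Set K)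
    (v : K) (hv : v ∈ Algebra.adjoin ℚ X) :
    ∃ d : ℕ, 0 < d ∧ (d : K) * v ∈ Algebra.adjoin ℤ X := by
  induction hv using Algebra.adjoin_induction with
  | mem y hy => exact ⟨1, one_pos, by simpa using Algebra.subset_adjoin hy⟩
  | algebraMap q =>
    refine ⟨q.den, q.pos, ?_⟩
    have h1 : algebraMap ℚ K q = (q : K) := by
      rw [eq_ratCast (algebraMap ℚ K)]
    have hden : ((q.den : ℕ) : K) ≠ 0 := by
      exact_mod_cast Nat.cast_ne_zero.mpr q.den_nz
    have h2 : (q.den : K) * (q : K) = ((q.num : ℤ) : K) := by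
      rw [Rat.cast_def]
      field_simp
    rw [h1, h2]
    have := Subalgebra.intCast_mem (Algebra.adjoin ℤ X) q.num
    simpa using this
  | add y z hy' hz' hy hz =>
    obtain ⟨d1, h1, m1⟩ := hy
    obtain ⟨d2, h2, m2⟩ := hz
    refine ⟨d1 * d2, Nat.mul_pos h1 h2, ?_⟩
    have : ((d1 * d2 : ℕ) : K) * (y + z) = (d2 : K) * ((d1 : K) * y) + (d1 : K) * ((d2 : K) * z) := by
      push_cast; ring
    rw [this]
    exact add_mem (mul_mem (Subalgebra.natCast_mem _ d2) m1)
      (mul_mem (Subalgebra.natCast_mem _ d1) m2)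
  | mul y z hy' hz' hy hz =>
    obtain ⟨d1, h1, m1⟩ := hy
    obtain ⟨d2, h2, m2⟩ := hz
    refine ⟨d1 * d2, Nat.mul_pos h1 h2, ?_⟩
    have : ((d1 * d2 : ℕ) : K) * (y * z) = ((d1 : K) * y) * ((d2 : K) * z) := by
      push_cast; ring
    rw [this]
    exact mul_mem m1 m2

lemma NN_pullback {R A B : Type*} [CommRing R] [CommRing A] [CommRing B]
    (f : R →+* A) (g : A →+* B) (hg : Function.Injective g) (x : A)
    (h : (g.comp f).IsIntegralElem (g x)) : f.IsIntegralElem x := by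
  obtain ⟨p, pm, hp⟩ := h
  refine ⟨p, pm, hg ?_⟩
  rw [map_zero, Polynomial.hom_eval₂]
  exact hp

theorem NN_main
    (S : Type*) [CommRing S] [IsDomain S] [Algebra.FiniteType ℤ S] [CharZero S]
    (K : Type*) [Field K] [Algebra S K] [IsFractionRing S K] :
    ∃ l : ℕ, 0 < l ∧ ∃ (n : ℕ) (x : Fin n → Localization.Away ((l : S))),
      AlgebraicIndependent ℤ x ∧
      ∀ s : Localization.Away ((l : S)),
        IsIntegral
          (Algebra.adjoin ℤ
            (Set.range x ∪ {IsLocalization.Away.invSelf ((l : S))})) s := by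
  classical
  obtain ⟨gens, hgens⟩ := (‹Algebra.FiniteType ℤ S› : Algebra.FiniteType ℤ S).out
  set m := gens.card with hm
  set σ : Fin m → S := fun i => (gens.equivFin.symm i : S) with hσdef
  have hσ : Set.range σ = (↑gens : Set S) := by
    ext y
    constructor
    · rintro ⟨i, rfl⟩; exact (gens.equivFin.symm i).2
    · intro hy; exact ⟨gens.equivFin ⟨y, hy⟩, by simp [hσdef]⟩
  haveI : CharZero K := charZero_of_injective_algebraMap (IsFractionRing.injective S K)
  set s : Fin m → K := fun j => algebraMap S K (σ j) with hs
  obtain ⟨n, x, hAI, hxadj, hint⟩ := NN_field ℚ m K s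
  -- denominators for x
  have him : ∀ u ∈ Algebra.adjoin ℤ (Set.range s), ∃ z : S, algebraMap S K z = u := by
    intro u hu
    have hle : Algebra.adjoin ℤ (Set.range s) ≤ ((algebraMap S K).toIntAlgHom.range) := by
      apply Algebra.adjoin_le
      rintro _ ⟨j, rfl⟩
      exact ⟨σ j, rfl⟩
    exact hle hu
  have hx' : ∀ k, ∃ d : ℕ, 0 < d ∧ ∃ z : S, (d : K) * x k = algebraMap S K z := by
    intro k
    obtain ⟨d, hd, hmem⟩ := NN_denom _ _ (hxadj k)
    obtain ⟨z, hz⟩ := him _ hmem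
    exact ⟨d, hd, z, hz.symm⟩
  choose dx hdx y hy using hx'
  set N : ℕ := ∏ k, dx k with hN
  have hNpos : 0 < N := Finset.prod_pos (fun k _ => hdx k)
  -- monic polynomials for integrality
  set Bx := Algebra.adjoin ℚ (Set.range x) with hBx
  set Zx := Algebra.adjoin ℤ (Set.range x) with hZx
  have hq : ∀ j, ∃ q : Polynomial K, q.Monic ∧ Polynomial.eval (s j) q = 0 ∧
      ∀ i, q.coeff i ∈ Bx := by
    intro j
    obtain ⟨p, pm, hp⟩ := hint j
    refine ⟨p.map (algebraMap Bx K), pm.map _, ?_, ?_⟩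
    · rw [Polynomial.eval_map]; exact hp
    · intro i
      rw [Polynomial.coeff_map]
      exact (p.coeff i).2
  choose q hqm hqe hqc using hq
  have hd2 : ∀ (j : Fin m) (i : ℕ), ∃ d : ℕ, 0 < d ∧ (d : K) * (q j).coeff i ∈ Zx := by
    intro j i
    exact NN_denom _ _ (hqc j i)
  choose df hdfpos hdfmem using hd2
  set Mb : ℕ := ∏ j, ∏ i ∈ Finset.range ((q j).natDegree + 1), df j i with hMb
  have hMbpos : 0 < Mb :=
    Finset.prod_pos fun j _ => Finset.prod_pos fun i _ => hdfpos j i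
  have hdvdM : ∀ j i, i ≤ (q j).natDegree → df j i ∣ Mb := by
    intro j i hi
    exact Dvd.dvd.trans (Finset.dvd_prod_of_mem _ (Finset.mem_range.mpr (Nat.lt_succ_of_le hi)))
      (Finset.dvd_prod_of_mem _ (Finset.mem_univ j))
  -- the integer to invert
  set l : ℕ := N * Mb with hl
  have hlpos : 0 < l := Nat.mul_pos hNpos hMbpos
  refine ⟨l, hlpos, ?_⟩
  have hlS : ((l : ℕ) : S) ≠ 0 := Nat.cast_ne_zero.mpr hlpos.ne'
  set L := Localization.Away ((l : ℕ) : S) with hL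
  have hlK : ((l : ℕ) : K) ≠ 0 := Nat.cast_ne_zero.mpr hlpos.ne'
  have hunit : IsUnit (algebraMap S K ((l : ℕ) : S)) := by
    rw [map_natCast]
    exact isUnit_iff_ne_zero.mpr hlK
  set ε : L →+* K := IsLocalization.Away.lift (g := algebraMap S K) ((l : ℕ) : S) hunit with hε
  have hεalg : ∀ a : S, ε (algebraMap S L a) = algebraMap S K a := fun a =>
    IsLocalization.Away.lift_eq _ _ _
  have hεinj : Function.Injective ε := by
    rw [injective_iff_map_eq_zero]
    intro a ha
    obtain ⟨⟨z, mm⟩, hzm⟩ := IsLocalization.surj (M := Submonoid.powers ((l : ℕ) : S)) a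
    have h1 : ε (a * algebraMap S L mm) = algebraMap S K z := by rw [hzm, hεalg]
    rw [map_mul, ha, zero_mul] at h1
    have hz : z = 0 := by
      apply IsFractionRing.injective S K
      rw [map_zero, ← h1]
    rw [hz, map_zero] at hzm
    have := IsLocalization.map_units L (⟨(mm : S), mm.2⟩ : Submonoid.powers ((l : ℕ) : S))
    exact (IsUnit.mul_left_eq_zero this).mp hzm
  set invL : L := IsLocalization.Away.invSelf ((l : ℕ) : S) with hinvL
  have hmulinv : algebraMap S L ((l : ℕ) : S) * invL = 1 := IsLocalization.Away.mul_invSelf _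
  have hεinv : ε invL = ((l : ℕ) : K)⁻¹ := by
    have h1 : ((l : ℕ) : K) * ε invL = 1 := by
      have := congrArg ε hmulinv
      rw [map_mul, map_one, hεalg, map_natCast] at this
      exact this
    exact (inv_eq_of_mul_eq_one_right h1).symm
  -- final elements
  have hdxl : ∀ k, dx k ∣ l := fun k =>
    Dvd.dvd.trans (Finset.dvd_prod_of_mem _ (Finset.mem_univ k)) (Dvd.intro Mb rfl)
  set e : Fin n → ℕ := fun k => l / dx k with he
  have hedx : ∀ k, (e k) * dx k = l := fun k => Nat.div_mul_cancel (hdxl k)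
  set xf : Fin n → L := fun k => algebraMap S L (y k) * ((e k : ℕ) : L) * invL with hxf
  have hdxK : ∀ k, ((dx k : ℕ) : K) ≠ 0 := fun k => Nat.cast_ne_zero.mpr (hdx k).ne'
  have hεx : ∀ k, ε (xf k) = x k := by
    intro k
    rw [hxf]
    simp only [map_mul, map_natCast, hεinv, hεalg]
    rw [← hy k]
    have h3 : ((e k : ℕ) : K) * ((dx k : ℕ) : K) = ((l : ℕ) : K) := by
      exact_mod_cast congrArg (fun t => ((t : ℕ) : K)) (hedx k)
    have h4 : ((dx k : ℕ) : K) * (((e k : ℕ) : K) * ((l : ℕ) : K)⁻¹) = 1 := by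
      rw [← mul_assoc, mul_comm ((dx k : ℕ) : K) ((e k : ℕ) : K), h3, mul_inv_cancel₀ hlK]
    have hek : ε ((e k : ℕ) : L) = ((e k : ℕ) : K) := map_natCast ε (e k)
    rw [hek]
    calc ((dx k : ℕ) : K) * x k * ((e k : ℕ) : K) * ((l : ℕ) : K)⁻¹
        = x k * (((dx k : ℕ) : K) * (((e k : ℕ) : K) * ((l : ℕ) : K)⁻¹)) := by ring
      _ = x k := by rw [h4, mul_one]
  have hAIfin : AlgebraicIndependent ℤ xf := by
    have hcomp : ε ∘ xf = x := funext hεx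
    have H : AlgebraicIndependent ℚ (ε ∘ xf) := hcomp ▸ hAI
    refine AlgebraicIndependent.of_ringHom_of_comp_eq (f := Int.castRingHom ℚ) (g := ε) H
      Int.cast_injective ?_
    exact Subsingleton.elim _ _
  set Bfin := Algebra.adjoin ℤ (Set.range xf ∪ {invL}) with hBfin
  refine ⟨n, xf, hAIfin, ?_⟩
  have hcast : (ε.comp (algebraMap ℤ L)) = algebraMap ℤ K := Subsingleton.elim _ _
  set εa : L →ₐ[ℤ] K := { toRingHom := ε, commutes' := fun r => RingHom.congr_fun hcast r } with hεa
  set W := Bfin.map εa with hW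
  have hWx : ∀ k, x k ∈ W := fun k => Subalgebra.mem_map.mpr ⟨xf k,
    Algebra.subset_adjoin (Or.inl (Set.mem_range_self k)), hεx k⟩
  have hWinv : ε invL ∈ W := Subalgebra.mem_map.mpr ⟨invL, Algebra.subset_adjoin (Or.inr rfl), rfl⟩
  have hZxW : ∀ u ∈ Zx, u ∈ W := by
    intro u hu
    refine Algebra.adjoin_le ?_ hu
    rintro v ⟨k, rfl⟩
    exact hWx k
  haveI : Nontrivial W := ⟨⟨0, 1, fun h => zero_ne_one (congrArg Subtype.val h)⟩⟩
  set τ : Bfin →+* W :=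
    { toFun := fun b => ⟨ε (b : L), Subalgebra.mem_map.mpr ⟨(b : L), b.2, rfl⟩⟩,
      map_one' := Subtype.ext (map_one ε),
      map_mul' := fun a b => Subtype.ext (map_mul ε (a : L) (b : L)),
      map_zero' := Subtype.ext (map_zero ε),
      map_add' := fun a b => Subtype.ext (map_add ε (a : L) (b : L)) }
    with hτ
  have hτsurj : Function.Surjective τ := by
    rintro ⟨u, hu⟩
    obtain ⟨b, hb, rfl⟩ := Subalgebra.mem_map.mp hu
    exact ⟨⟨b, hb⟩, rfl⟩
  have hτcomp : (algebraMap W K).comp (τ : Bfin →+* W) = ε.comp (algebraMap Bfin L) :=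
    RingHom.ext fun b => rfl
  have hgen : ∀ j, IsIntegral Bfin (algebraMap S L (σ j)) := by
    intro j
    set Q := (q j).scaleRoots ((Mb : ℕ) : K) with hQ
    have hQm : Q.Monic := (Polynomial.monic_scaleRoots_iff _).mpr (hqm j)
    have hQe : Polynomial.eval (((Mb : ℕ) : K) * s j) Q = 0 := by
      have h0 : Polynomial.eval₂ (RingHom.id K) (s j) (q j) = 0 := by
        rw [Polynomial.eval₂_eq_eval_map, Polynomial.map_id]
        exact hqe j
      have h1 := Polynomial.scaleRoots_eval₂_eq_zero (RingHom.id K) (s := ((Mb : ℕ) : K)) h0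
      rw [Polynomial.eval₂_eq_eval_map, Polynomial.map_id] at h1
      simpa using h1
    have hQc : ∀ i, Q.coeff i ∈ W := by
      intro i
      rw [hQ, Polynomial.coeff_scaleRoots]
      rcases lt_trichotomy i ((q j).natDegree) with hi | hi | hi
      · obtain ⟨c, hc⟩ := hdvdM j i hi.le
        have h1 : (q j).natDegree - i = ((q j).natDegree - i - 1) + 1 := by omega
        have h3 : df j i * (c * Mb ^ ((q j).natDegree - i - 1)) = Mb ^ ((q j).natDegree - i) := by
          rw [h1, pow_succ]
          calc df j i * (c * Mb ^ ((q j).natDegree - i - 1))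
              = (df j i * c) * Mb ^ ((q j).natDegree - i - 1) := by ring
            _ = Mb * Mb ^ ((q j).natDegree - i - 1) := by rw [← hc]
            _ = Mb ^ ((q j).natDegree - i - 1) * Mb := by ring
        have h4 : (q j).coeff i * ((Mb : ℕ) : K) ^ ((q j).natDegree - i)
            = ((c * Mb ^ ((q j).natDegree - i - 1) : ℕ) : K)
              * (((df j i : ℕ) : K) * (q j).coeff i) := by
          have h5 : ((Mb : ℕ) : K) ^ ((q j).natDegree - i)
              = ((df j i : ℕ) : K) * ((c * Mb ^ ((q j).natDegree - i - 1) : ℕ) : K) := by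
            rw [← Nat.cast_pow, ← h3]
            push_cast
            ring
          rw [h5]
          ring
        rw [h4]
        exact mul_mem (Subalgebra.natCast_mem _ _) (hZxW _ (hdfmem j i))
      · rw [hi, Nat.sub_self, pow_zero, mul_one, (hqm j).coeff_natDegree]
        exact one_mem _
      · rw [Polynomial.coeff_eq_zero_of_natDegree_lt hi, zero_mul]
        exact zero_mem _
    have hsub : (↑Q.coeffs : Set K) ⊆ (W.toSubring : Set K) := by
      intro c hc
      obtain ⟨i, -, rfl⟩ := Polynomial.mem_coeffs_iff.mp hc
      exact hQc _
    have hWint : IsIntegral W (((Mb : ℕ) : K) * s j) := by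
      refine ⟨Q.toSubring W.toSubring hsub, (Polynomial.monic_toSubring _ _ _).mpr hQm, ?_⟩
      have halg : algebraMap W K = W.toSubring.subtype := rfl
      rw [halg, Polynomial.eval₂_eq_eval_map, Polynomial.map_toSubring]
      exact hQe
    have hWsj : IsIntegral W (s j) := by
      refine IsIntegral.of_mul_unit (y := ((Mb : ℕ) : K))
        (r := ⟨((N : ℕ) : K) * ε invL, mul_mem (Subalgebra.natCast_mem _ _) hWinv⟩) ?_ ?_
      · show (((N : ℕ) : K) * ε invL) * ((Mb : ℕ) : K) = 1
        rw [hεinv]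
        have h6 : ((N : ℕ) : K) * ((l : ℕ) : K)⁻¹ * ((Mb : ℕ) : K)
            = ((N * Mb : ℕ) : K) * ((l : ℕ) : K)⁻¹ := by push_cast; ring
        rw [h6, ← hl, mul_inv_cancel₀ hlK]
      · rw [mul_comm]
        exact hWint
    refine NN_pullback (algebraMap Bfin L) ε hεinj _ ?_
    rw [hεalg (σ j)]
    obtain ⟨P0, hP0m, hP0e⟩ := hWsj
    have hlift : P0 ∈ Polynomial.lifts (τ : Bfin →+* W) := by
      rw [Polynomial.lifts_iff_coeff_lifts]
      intro i
      exact hτsurj (P0.coeff i)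
    obtain ⟨P1, hP1map, -, hP1m⟩ := Polynomial.lifts_and_degree_eq_and_monic hlift hP0m
    refine ⟨P1, hP1m, ?_⟩
    rw [← hτcomp, ← Polynomial.eval₂_map, hP1map]
    exact hP0e
  intro a
  obtain ⟨⟨z, mm⟩, hzm⟩ := IsLocalization.surj (M := Submonoid.powers ((l : ℕ) : S)) a
  obtain ⟨nn, hnn⟩ := mm.2
  have hmminv : algebraMap S L (mm : S) * invL ^ nn = 1 := by
    rw [← hnn, map_pow, ← mul_pow, hmulinv, one_pow]
  have ha : a = algebraMap S L z * invL ^ nn := by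
    calc a = a * (algebraMap S L (mm : S) * invL ^ nn) := by rw [hmminv, mul_one]
      _ = (a * algebraMap S L (mm : S)) * invL ^ nn := by ring
      _ = algebraMap S L z * invL ^ nn := by rw [hzm]
  have hzmem : z ∈ Subring.closure (↑gens : Set S) := by
    have h7 : z ∈ Algebra.adjoin ℤ (↑gens : Set S) := by rw [hgens]; trivial
    rwa [Algebra.adjoin_int] at h7
  have hzint' : ∀ z' : S, z' ∈ Subring.closure (↑gens : Set S) →
      IsIntegral Bfin (algebraMap S L z') := by
    intro z' hz'
    induction hz' using Subring.closure_induction with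
    | mem g hg =>
      have h8 : g ∈ Set.range σ := hσ ▸ hg
      obtain ⟨j, rfl⟩ := h8
      exact hgen j
    | zero => rw [map_zero]; exact isIntegral_zero
    | one => rw [map_one]; exact isIntegral_one
    | add u v hu' hv' hu hv => rw [map_add]; exact hu.add hv
    | neg u hu' hu => rw [map_neg]; exact hu.neg
    | mul u v hu' hv' hu hv => rw [map_mul]; exact hu.mul hv
  have hzint : IsIntegral Bfin (algebraMap S L z) := hzint' z hzmem
  have hinvint : IsIntegral Bfin invL := by
    have h9 := isIntegral_algebraMap (A := L)
      (x := (⟨invL, Algebra.subset_adjoin (Or.inr rfl)⟩ : Bfin))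
    simpa using h9
  rw [ha]
  exact hzint.mul (hinvint.pow nn)

set_option synthInstance.maxHeartbeats 1000000
theorem noether_normalization_over_Z_inverted
    (S : Type*) [CommRing S] [IsDomain S] [Algebra.FiniteType ℤ S] [CharZero S] :
    ∃ l : ℕ, 0 < l ∧ ∃ (n : ℕ) (x : Fin n → Localization.Away ((l : S))),
      AlgebraicIndependent ℤ x ∧
      ∀ s : Localization.Away ((l : S)),
        IsIntegral
          (Algebra.adjoin ℤ
            (Set.range x ∪ {IsLocalization.Away.invSelf ((l : S))})) s := by
  exact NN_main S (FractionRing S)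
end
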